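/- With • defined from ϖ as above, the Leibniz identity (u⧢v)•w = (u•w)⧢v + u⧢(v•w) holds for all u,v,w ∈ T(V) if and only if ϖ((u⧢v)⊗w) = ε(u)ϖ(v⊗w) + ε(v)ϖ(u⊗w) for all u,v,w ∈ T(V). -/

import Mathlib

open TensorProduct Finset

section Aux
variable {K V : Type*} [Field K] [AddCommGroup V] [Module K V]

private theorem consInd
    (M : Submodule K (TensorAlgebra K V)) (h1 : (1 : TensorAlgebra K V) ∈ M)
    (hc : ∀ (x : V) (u : TensorAlgebra K V), u ∈ M → TensorAlgebra.ι K x * u ∈ M)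
    (u : TensorAlgebra K V) : u ∈ M := by
  have key : ∀ a : TensorAlgebra K V, ∀ m ∈ M, a * m ∈ M := by
    intro a
    induction a using TensorAlgebra.induction with
    | algebraMap r => intro m hm; rw [← Algebra.smul_def]; exact M.smul_mem _ hm
    | ι x => intro m hm; exact hc x m hm
    | mul a b ha hb => intro m hm; rw [mul_assoc]; exact ha _ (hb _ hm)
    | add a b ha hb => intro m hm; rw [add_mul]; exact M.add_mem (ha _ hm) (hb _ hm)
  simpa using key u 1 h1

section hyps1
variable (π : TensorAlgebra K V →ₗ[K] V) (ε : TensorAlgebra K V →ₗ[K] K)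

private theorem piCons
    (hπι : ∀ v : V, π (TensorAlgebra.ι K v) = v)
    (hπtwo : ∀ (v w : V) (u : TensorAlgebra K V),
      π (TensorAlgebra.ι K v * (TensorAlgebra.ι K w * u)) = 0)
    (hεone : ε 1 = 1)
    (hεcons : ∀ (v : V) (u : TensorAlgebra K V), ε (TensorAlgebra.ι K v * u) = 0)
    (x : V) (m : TensorAlgebra K V) :
    π (TensorAlgebra.ι K x * m) = ε m • x := by
  have h := consInd (LinearMap.eqLocus (π ∘ₗ LinearMap.mulLeft K (TensorAlgebra.ι K x))
      (ε.smulRight x)) ?_ ?_ m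
  · simpa [LinearMap.eqLocus, LinearMap.mem_ker] using h
  · show π (TensorAlgebra.ι K x * 1) = ε (1 : TensorAlgebra K V) • x
    simp [hπι, hεone]
  · intro y u _
    show π (TensorAlgebra.ι K x * (TensorAlgebra.ι K y * u)) = ε (TensorAlgebra.ι K y * u) • x
    simp [hπtwo, hεcons]

end hyps1

section hyps2
variable (sh : TensorAlgebra K V →ₗ[K] TensorAlgebra K V →ₗ[K] TensorAlgebra K V)
  (ε : TensorAlgebra K V →ₗ[K] K)
  (Δ : TensorAlgebra K V →ₗ[K] TensorAlgebra K V ⊗[K] TensorAlgebra K V)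

private theorem epsSh
    (hshone : ∀ u, sh 1 u = u) (hshone' : ∀ u, sh u 1 = u)
    (hshcons : ∀ (x y : V) (u w : TensorAlgebra K V),
      sh (TensorAlgebra.ι K x * u) (TensorAlgebra.ι K y * w) =
        TensorAlgebra.ι K x * sh u (TensorAlgebra.ι K y * w)
        + TensorAlgebra.ι K y * sh (TensorAlgebra.ι K x * u) w)
    (hεone : ε 1 = 1)
    (hεcons : ∀ (v : V) (u : TensorAlgebra K V), ε (TensorAlgebra.ι K v * u) = 0)
    (u v : TensorAlgebra K V) : ε (sh u v) = ε u * ε v := by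
  have aux : ∀ (x : V) (u' v : TensorAlgebra K V), ε (sh (TensorAlgebra.ι K x * u') v) = 0 := by
    intro x u' v
    have h := consInd (LinearMap.eqLocus (ε ∘ₗ (sh (TensorAlgebra.ι K x * u'))) 0) ?_ ?_ v
    · rwa [LinearMap.mem_eqLocus] at h
    · rw [LinearMap.mem_eqLocus]
      show ε (sh _ 1) = _
      simp [hshone', hεcons]
    · intro y w _
      rw [LinearMap.mem_eqLocus]
      show ε (sh _ (TensorAlgebra.ι K y * w)) = _
      rw [hshcons]
      simp [hεcons]
  have h := consInd (LinearMap.eqLocus (ε ∘ₗ sh.flip v) ((ε v) • ε)) ?_ ?_ u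
  · rw [LinearMap.mem_eqLocus] at h
    simpa [mul_comm] using h
  · rw [LinearMap.mem_eqLocus]
    show ε (sh 1 v) = ε v • ε 1
    simp [hshone, hεone]
  · intro x u' _
    rw [LinearMap.mem_eqLocus]
    show ε (sh (TensorAlgebra.ι K x * u') v) = ε v • ε (TensorAlgebra.ι K x * u')
    simp [aux, hεcons]

private theorem CLmap
    (hΔone : Δ 1 = 1 ⊗ₜ[K] 1)
    (hΔcons : ∀ (v : V) (u : TensorAlgebra K V),
      Δ (TensorAlgebra.ι K v * u) =
        1 ⊗ₜ[K] (TensorAlgebra.ι K v * u)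
        + TensorProduct.map (LinearMap.mulLeft K (TensorAlgebra.ι K v)) LinearMap.id (Δ u))
    (hεone : ε 1 = 1)
    (hεcons : ∀ (v : V) (u : TensorAlgebra K V), ε (TensorAlgebra.ι K v * u) = 0)
    (z : TensorAlgebra K V) :
    TensorProduct.lift ((LinearMap.lsmul K (TensorAlgebra K V)) ∘ₗ ε) (Δ z) = z := by
  have h := consInd (LinearMap.eqLocus
      (TensorProduct.lift ((LinearMap.lsmul K (TensorAlgebra K V)) ∘ₗ ε) ∘ₗ Δ) LinearMap.id) ?_ ?_ z
  · rwa [LinearMap.mem_eqLocus] at h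
  · rw [LinearMap.mem_eqLocus]
    show TensorProduct.lift _ (Δ 1) = _
    simp [hΔone, hεone]
  · intro x u _
    rw [LinearMap.mem_eqLocus]
    show TensorProduct.lift _ (Δ (TensorAlgebra.ι K x * u)) = LinearMap.id (TensorAlgebra.ι K x * u)
    rw [hΔcons]
    have hz : (TensorProduct.lift ((LinearMap.lsmul K (TensorAlgebra K V)) ∘ₗ ε)) ∘ₗ
        (TensorProduct.map (LinearMap.mulLeft K (TensorAlgebra.ι K x)) LinearMap.id) = 0 :=
      TensorProduct.ext' (fun a b => by simp [hεcons])
    have hz' := LinearMap.congr_fun hz (Δ u)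
    simp only [LinearMap.comp_apply, LinearMap.zero_apply] at hz'
    simp [hz', hεone]

private theorem CRmap
    (hΔone : Δ 1 = 1 ⊗ₜ[K] 1)
    (hΔcons : ∀ (v : V) (u : TensorAlgebra K V),
      Δ (TensorAlgebra.ι K v * u) =
        1 ⊗ₜ[K] (TensorAlgebra.ι K v * u)
        + TensorProduct.map (LinearMap.mulLeft K (TensorAlgebra.ι K v)) LinearMap.id (Δ u))
    (hεone : ε 1 = 1)
    (hεcons : ∀ (v : V) (u : TensorAlgebra K V), ε (TensorAlgebra.ι K v * u) = 0)
    (z : TensorAlgebra K V) :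
    TensorProduct.lift (((LinearMap.lsmul K (TensorAlgebra K V)) ∘ₗ ε).flip) (Δ z) = z := by
  have h := consInd (LinearMap.eqLocus
      (TensorProduct.lift (((LinearMap.lsmul K (TensorAlgebra K V)) ∘ₗ ε).flip) ∘ₗ Δ)
      LinearMap.id) ?_ ?_ z
  · rwa [LinearMap.mem_eqLocus] at h
  · rw [LinearMap.mem_eqLocus]
    show TensorProduct.lift _ (Δ 1) = _
    simp [hΔone, hεone]
  · intro x u hu
    rw [LinearMap.mem_eqLocus] at hu ⊢
    show TensorProduct.lift _ (Δ (TensorAlgebra.ι K x * u)) = LinearMap.id (TensorAlgebra.ι K x * u)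
    rw [hΔcons]
    have hz : (TensorProduct.lift (((LinearMap.lsmul K (TensorAlgebra K V)) ∘ₗ ε).flip)) ∘ₗ
        (TensorProduct.map (LinearMap.mulLeft K (TensorAlgebra.ι K x)) LinearMap.id) =
        (LinearMap.mulLeft K (TensorAlgebra.ι K x)) ∘ₗ
          (TensorProduct.lift (((LinearMap.lsmul K (TensorAlgebra K V)) ∘ₗ ε).flip)) :=
      TensorProduct.ext' (fun a b => by simp [mul_smul_comm])
    have hz' := LinearMap.congr_fun hz (Δ u)
    simp only [LinearMap.comp_apply] at hz'
    have hu' : TensorProduct.lift (((LinearMap.lsmul K (TensorAlgebra K V)) ∘ₗ ε).flip) (Δ u) = u := hu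
    simp [hz', hu', hεcons]

end hyps2

private theorem CLsL' {W : Type*} [AddCommGroup W] [Module K W]
    (ε : TensorAlgebra K V →ₗ[K] K)
    (Δ : TensorAlgebra K V →ₗ[K] TensorAlgebra K V ⊗[K] TensorAlgebra K V)
    (hCL : ∀ z, TensorProduct.lift ((LinearMap.lsmul K (TensorAlgebra K V)) ∘ₗ ε) (Δ z) = z)
    (L : TensorAlgebra K V →ₗ[K] W) (u : TensorAlgebra K V)
    (s : Finset (TensorAlgebra K V × TensorAlgebra K V))
    (hs : Δ u = ∑ p ∈ s, p.1 ⊗ₜ[K] p.2) :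
    ∑ p ∈ s, ε p.1 • L p.2 = L u := by
  have h0 : ∑ p ∈ s, ε p.1 • p.2 = u := by
    have := hCL u
    rw [hs, map_sum] at this
    simpa using this
  calc ∑ p ∈ s, ε p.1 • L p.2 = L (∑ p ∈ s, ε p.1 • p.2) := by rw [map_sum]; simp
    _ = L u := by rw [h0]

private theorem sum_comm3a {M α β γ : Type*} [AddCommMonoid M] (s : Finset α) (t : Finset β)
    (r : Finset γ) (f : α → β → γ → M) :
    ∑ c ∈ r, ∑ b ∈ t, ∑ a ∈ s, f a b c = ∑ a ∈ s, ∑ b ∈ t, ∑ c ∈ r, f a b c :=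
  calc ∑ c ∈ r, ∑ b ∈ t, ∑ a ∈ s, f a b c = ∑ b ∈ t, ∑ c ∈ r, ∑ a ∈ s, f a b c :=
        Finset.sum_comm
    _ = ∑ b ∈ t, ∑ a ∈ s, ∑ c ∈ r, f a b c := Finset.sum_congr rfl fun b _ => Finset.sum_comm
    _ = ∑ a ∈ s, ∑ b ∈ t, ∑ c ∈ r, f a b c := Finset.sum_comm

private theorem sum_comm3b {M α β γ : Type*} [AddCommMonoid M] (s : Finset α) (t : Finset β)
    (r : Finset γ) (f : α → β → γ → M) :
    ∑ b ∈ t, ∑ c ∈ r, ∑ a ∈ s, f a b c = ∑ a ∈ s, ∑ b ∈ t, ∑ c ∈ r, f a b c :=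
  calc ∑ b ∈ t, ∑ c ∈ r, ∑ a ∈ s, f a b c = ∑ b ∈ t, ∑ a ∈ s, ∑ c ∈ r, f a b c :=
        Finset.sum_congr rfl fun b _ => Finset.sum_comm
    _ = ∑ a ∈ s, ∑ b ∈ t, ∑ c ∈ r, f a b c := Finset.sum_comm

private theorem CRsL' {W : Type*} [AddCommGroup W] [Module K W]
    (ε : TensorAlgebra K V →ₗ[K] K)
    (Δ : TensorAlgebra K V →ₗ[K] TensorAlgebra K V ⊗[K] TensorAlgebra K V)
    (hCR : ∀ z, TensorProduct.lift (((LinearMap.lsmul K (TensorAlgebra K V)) ∘ₗ ε).flip) (Δ z) = z)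
    (L : TensorAlgebra K V →ₗ[K] W) (u : TensorAlgebra K V)
    (s : Finset (TensorAlgebra K V × TensorAlgebra K V))
    (hs : Δ u = ∑ p ∈ s, p.1 ⊗ₜ[K] p.2) :
    ∑ p ∈ s, ε p.2 • L p.1 = L u := by
  have h0 : ∑ p ∈ s, ε p.2 • p.1 = u := by
    have := hCR u
    rw [hs, map_sum] at this
    simpa using this
  calc ∑ p ∈ s, ε p.2 • L p.1 = L (∑ p ∈ s, ε p.2 • p.1) := by rw [map_sum]; simp
    _ = L u := by rw [h0]

section hyps3
variable (sh : TensorAlgebra K V →ₗ[K] TensorAlgebra K V →ₗ[K] TensorAlgebra K V)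
  (ε : TensorAlgebra K V →ₗ[K] K) (π : TensorAlgebra K V →ₗ[K] V)
  (Δ : TensorAlgebra K V →ₗ[K] TensorAlgebra K V ⊗[K] TensorAlgebra K V)

private theorem piSh
    (hshone : ∀ u, sh 1 u = u) (hshone' : ∀ u, sh u 1 = u)
    (hshcons : ∀ (x y : V) (u w : TensorAlgebra K V),
      sh (TensorAlgebra.ι K x * u) (TensorAlgebra.ι K y * w) =
        TensorAlgebra.ι K x * sh u (TensorAlgebra.ι K y * w)
        + TensorAlgebra.ι K y * sh (TensorAlgebra.ι K x * u) w)
    (hπone : π 1 = 0)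
    (hεone : ε 1 = 1)
    (hεcons : ∀ (v : V) (u : TensorAlgebra K V), ε (TensorAlgebra.ι K v * u) = 0)
    (hpiCons : ∀ (x : V) (m : TensorAlgebra K V), π (TensorAlgebra.ι K x * m) = ε m • x)
    (hepsSh : ∀ u v, ε (sh u v) = ε u * ε v)
    (u v : TensorAlgebra K V) :
    π (sh u v) = ε u • π v + ε v • π u := by
  have aux : ∀ (x : V) (u' v : TensorAlgebra K V),
      π (sh (TensorAlgebra.ι K x * u') v) = ε v • π (TensorAlgebra.ι K x * u') := by
    intro x u' v
    have h := consInd (LinearMap.eqLocus (π ∘ₗ (sh (TensorAlgebra.ι K x * u')))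
        (ε.smulRight (π (TensorAlgebra.ι K x * u')))) ?_ ?_ v
    · rw [LinearMap.mem_eqLocus] at h
      simpa using h
    · rw [LinearMap.mem_eqLocus]
      show π (sh _ 1) = _
      simp [hshone', hεone]
    · intro y w _
      rw [LinearMap.mem_eqLocus]
      show π (sh _ (TensorAlgebra.ι K y * w)) = _
      rw [hshcons]
      simp [hpiCons, hepsSh, hεcons]
  have h := consInd (LinearMap.eqLocus (π ∘ₗ sh.flip v)
      (ε.smulRight (π v) + (ε v) • π)) ?_ ?_ u
  · rw [LinearMap.mem_eqLocus] at h
    simpa using h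
  · rw [LinearMap.mem_eqLocus]
    show π (sh 1 v) = ε (1 : TensorAlgebra K V) • π v + ε v • π 1
    simp [hshone, hεone, hπone]
  · intro x u' _
    rw [LinearMap.mem_eqLocus]
    show π (sh (TensorAlgebra.ι K x * u') v) = ε (TensorAlgebra.ι K x * u') • π v
      + ε v • π (TensorAlgebra.ι K x * u')
    rw [aux]
    simp [hεcons]

private theorem reconMap
    (hΔone : Δ 1 = 1 ⊗ₜ[K] 1)
    (hΔcons : ∀ (v : V) (u : TensorAlgebra K V),
      Δ (TensorAlgebra.ι K v * u) =
        1 ⊗ₜ[K] (TensorAlgebra.ι K v * u)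
        + TensorProduct.map (LinearMap.mulLeft K (TensorAlgebra.ι K v)) LinearMap.id (Δ u))
    (hπone : π 1 = 0)
    (hεone : ε 1 = 1)
    (hεcons : ∀ (v : V) (u : TensorAlgebra K V), ε (TensorAlgebra.ι K v * u) = 0)
    (hpiCons : ∀ (x : V) (m : TensorAlgebra K V), π (TensorAlgebra.ι K x * m) = ε m • x)
    (hCL : ∀ z, TensorProduct.lift ((LinearMap.lsmul K (TensorAlgebra K V)) ∘ₗ ε) (Δ z) = z)
    (z : TensorAlgebra K V) :
    TensorProduct.lift ((LinearMap.mul K (TensorAlgebra K V)) ∘ₗ (TensorAlgebra.ι K ∘ₗ π)) (Δ z)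
      = z - ε z • 1 := by
  have h := consInd (LinearMap.eqLocus
      (TensorProduct.lift ((LinearMap.mul K (TensorAlgebra K V)) ∘ₗ (TensorAlgebra.ι K ∘ₗ π)) ∘ₗ Δ)
      (LinearMap.id - ε.smulRight 1)) ?_ ?_ z
  · rw [LinearMap.mem_eqLocus] at h
    simpa using h
  · rw [LinearMap.mem_eqLocus]
    show TensorProduct.lift _ (Δ 1) = _
    simp [hΔone, hπone, hεone]
  · intro x u _
    rw [LinearMap.mem_eqLocus]
    show TensorProduct.lift _ (Δ (TensorAlgebra.ι K x * u)) = _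
    rw [hΔcons]
    obtain ⟨s, hs⟩ := TensorProduct.exists_finset (Δ u)
    have key : TensorProduct.lift ((LinearMap.mul K (TensorAlgebra K V)) ∘ₗ (TensorAlgebra.ι K ∘ₗ π))
        (TensorProduct.map (LinearMap.mulLeft K (TensorAlgebra.ι K x)) LinearMap.id (Δ u))
        = TensorAlgebra.ι K x * u := by
      rw [hs, map_sum, map_sum]
      have : ∀ p ∈ s, TensorProduct.lift ((LinearMap.mul K (TensorAlgebra K V)) ∘ₗ (TensorAlgebra.ι K ∘ₗ π))
          (TensorProduct.map (LinearMap.mulLeft K (TensorAlgebra.ι K x)) LinearMap.id (p.1 ⊗ₜ[K] p.2))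
          = ε p.1 • (TensorAlgebra.ι K x * p.2) := by
        intro p _
        simp [hpiCons, smul_mul_assoc]
      rw [Finset.sum_congr rfl this]
      simp_rw [← mul_smul_comm]
      rw [← Finset.mul_sum]
      congr 1
      have := hCL u
      rw [hs, map_sum] at this
      simpa using this
    simp only [map_add, key]
    simp [hπone, hεcons]
end hyps3

section hyps4
variable (sh B : TensorAlgebra K V →ₗ[K] TensorAlgebra K V →ₗ[K] TensorAlgebra K V)
  (ε : TensorAlgebra K V →ₗ[K] K)
  (Δ : TensorAlgebra K V →ₗ[K] TensorAlgebra K V ⊗[K] TensorAlgebra K V)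

set_option synthInstance.maxHeartbeats 1000000 in
private theorem epsB
    (hepsSh : ∀ u v, ε (sh u v) = ε u * ε v)
    (hCL : ∀ z, TensorProduct.lift ((LinearMap.lsmul K (TensorAlgebra K V)) ∘ₗ ε) (Δ z) = z)
    (hCR : ∀ z, TensorProduct.lift (((LinearMap.lsmul K (TensorAlgebra K V)) ∘ₗ ε).flip) (Δ z) = z)
    (hBΔ : ∀ u v : TensorAlgebra K V, Δ (B u v) =
      TensorProduct.map LinearMap.id (B.flip v) (Δ u)
      + TensorProduct.map (TensorProduct.lift B) (TensorProduct.lift sh)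
          (TensorProduct.tensorTensorTensorComm K (TensorAlgebra K V)
            (TensorAlgebra K V) (TensorAlgebra K V) (TensorAlgebra K V)
            (Δ u ⊗ₜ[K] Δ v)))
    (u v : TensorAlgebra K V) : ε (B u v) = 0 := by
  obtain ⟨su, hsu⟩ := TensorProduct.exists_finset (Δ u)
  obtain ⟨sv, hsv⟩ := TensorProduct.exists_finset (Δ v)
  have main : ε (B u v) = ε (TensorProduct.lift ((LinearMap.lsmul K (TensorAlgebra K V)) ∘ₗ ε) (Δ (B u v))) := by rw [hCL]
  rw [hBΔ u v] at main
  have e1 : ε (TensorProduct.lift ((LinearMap.lsmul K (TensorAlgebra K V)) ∘ₗ ε) (TensorProduct.map LinearMap.id (B.flip v) (Δ u)))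
      = ∑ p ∈ su, ε p.1 • ε (B p.2 v) := by
    rw [hsu]
    simp [map_sum, smul_eq_mul]
  have e2 : ε (TensorProduct.lift ((LinearMap.lsmul K (TensorAlgebra K V)) ∘ₗ ε) (TensorProduct.map (TensorProduct.lift B)
      (TensorProduct.lift sh) (TensorProduct.tensorTensorTensorComm K (TensorAlgebra K V) (TensorAlgebra K V) (TensorAlgebra K V) (TensorAlgebra K V) (Δ u ⊗ₜ[K] Δ v))))
      = ∑ p ∈ su, ∑ q ∈ sv, ε (B p.1 q.1) • ε (sh p.2 q.2) := by
    rw [hsu, hsv]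
    simp [sum_tmul, tmul_sum, map_sum, TensorProduct.tensorTensorTensorComm_tmul, Finset.mul_sum,
      smul_eq_mul]
    rw [Finset.sum_comm]
  rw [map_add, map_add, e1, e2] at main
  have c1 : ∑ p ∈ su, ε p.1 • ε (B p.2 v) = ε (B u v) := by
    have := CLsL' (K := K) (V := V) ε Δ hCL (ε ∘ₗ B.flip v) u su hsu
    simpa using this
  have c2 : ∑ p ∈ su, ∑ q ∈ sv, ε (B p.1 q.1) • ε (sh p.2 q.2) = ε (B u v) := by
    have inner : ∀ p ∈ su, ∑ q ∈ sv, ε (B p.1 q.1) • ε (sh p.2 q.2)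
        = ε p.2 • ε (B p.1 v) := by
      intro p _
      have := CRsL' (K := K) (V := V) ε Δ hCR (ε ∘ₗ B p.1) v sv hsv
      simp only [LinearMap.comp_apply] at this
      calc ∑ q ∈ sv, ε (B p.1 q.1) • ε (sh p.2 q.2)
          = ε p.2 • ∑ q ∈ sv, ε q.2 • ε (B p.1 q.1) := by
            rw [Finset.smul_sum]
            refine Finset.sum_congr rfl fun q _ => ?_
            rw [hepsSh]
            simp only [smul_eq_mul]
            ring
        _ = ε p.2 • ε (B p.1 v) := by rw [this]
    rw [Finset.sum_congr rfl inner]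
    have := CRsL' (K := K) (V := V) ε Δ hCR (ε ∘ₗ B.flip v) u su hsu
    simpa using this
  rw [c1, c2] at main
  have := main.symm
  rwa [add_eq_left] at this
end hyps4

section hyps5
variable (sh : TensorAlgebra K V →ₗ[K] TensorAlgebra K V →ₗ[K] TensorAlgebra K V)
  (hshone : ∀ u, sh 1 u = u) (hshone' : ∀ u, sh u 1 = u)
  (hshcons : ∀ (x y : V) (u w : TensorAlgebra K V),
      sh (TensorAlgebra.ι K x * u) (TensorAlgebra.ι K y * w) =
        TensorAlgebra.ι K x * sh u (TensorAlgebra.ι K y * w)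
        + TensorAlgebra.ι K y * sh (TensorAlgebra.ι K x * u) w)

include hshone hshone' hshcons

private theorem shComm (u v : TensorAlgebra K V) : sh u v = sh v u := by
  have h := consInd (LinearMap.eqLocus sh sh.flip) ?_ ?_ u
  · rw [LinearMap.mem_eqLocus] at h
    exact LinearMap.congr_fun h v
  · rw [LinearMap.mem_eqLocus]
    ext w
    simp [hshone, hshone']
  · intro x u' hu'
    rw [LinearMap.mem_eqLocus] at hu' ⊢
    have h2 := consInd (LinearMap.eqLocus (sh (TensorAlgebra.ι K x * u'))
        (sh.flip (TensorAlgebra.ι K x * u'))) ?_ ?_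
    · exact LinearMap.ext fun w => by
        have := h2 w; rwa [LinearMap.mem_eqLocus] at this
    · rw [LinearMap.mem_eqLocus]
      show sh _ 1 = sh 1 _
      simp [hshone, hshone']
    · intro y v' hv'
      rw [LinearMap.mem_eqLocus] at hv' ⊢
      show sh (TensorAlgebra.ι K x * u') (TensorAlgebra.ι K y * v')
        = sh (TensorAlgebra.ι K y * v') (TensorAlgebra.ι K x * u')
      rw [hshcons, hshcons y x v' u']
      have e1 : sh u' (TensorAlgebra.ι K y * v') = sh (TensorAlgebra.ι K y * v') u' :=
        LinearMap.congr_fun hu' (TensorAlgebra.ι K y * v')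
      have e2 : sh (TensorAlgebra.ι K x * u') v' = sh v' (TensorAlgebra.ι K x * u') := hv'
      rw [e1, e2]
      abel

private theorem shAssoc (u v w : TensorAlgebra K V) :
    sh (sh u v) w = sh u (sh v w) := by
  have h := consInd (⨅ (v : TensorAlgebra K V), ⨅ (w : TensorAlgebra K V),
      LinearMap.eqLocus (sh.flip w ∘ₗ sh.flip v) (sh.flip (sh v w))) ?_ ?_ u
  · simp only [Submodule.mem_iInf, LinearMap.mem_eqLocus] at h
    have := h v w
    simpa using this
  · simp only [Submodule.mem_iInf, LinearMap.mem_eqLocus]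
    intro v w
    show sh (sh 1 v) w = sh 1 (sh v w)
    simp [hshone]
  · intro x u' hu'0
    simp only [Submodule.mem_iInf, LinearMap.mem_eqLocus] at hu'0
    simp only [Submodule.mem_iInf, LinearMap.mem_eqLocus]
    have hu' : ∀ v w, sh (sh u' v) w = sh u' (sh v w) := by
      intro v w; have := hu'0 v w; simpa using this
    intro v w
    show sh (sh (TensorAlgebra.ι K x * u') v) w = sh (TensorAlgebra.ι K x * u') (sh v w)
    have hv := consInd (⨅ (w : TensorAlgebra K V),
        LinearMap.eqLocus (sh.flip w ∘ₗ sh (TensorAlgebra.ι K x * u'))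
          (sh (TensorAlgebra.ι K x * u') ∘ₗ sh.flip w)) ?_ ?_ v
    · simp only [Submodule.mem_iInf, LinearMap.mem_eqLocus] at hv
      have := hv w
      simpa using this
    · simp only [Submodule.mem_iInf, LinearMap.mem_eqLocus]
      intro w'
      show sh (sh _ 1) w' = sh _ (sh 1 w')
      simp [hshone, hshone']
    · intro y v' hv'0
      simp only [Submodule.mem_iInf, LinearMap.mem_eqLocus] at hv'0
      simp only [Submodule.mem_iInf, LinearMap.mem_eqLocus]
      have hv'' : ∀ w, sh (sh (TensorAlgebra.ι K x * u') v') w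
          = sh (TensorAlgebra.ι K x * u') (sh v' w) := by
        intro w'; have := hv'0 w'; simpa using this
      have hv' : ∀ w, sh (sh (TensorAlgebra.ι K x * u') (TensorAlgebra.ι K y * v')) w
          = sh (TensorAlgebra.ι K x * u') (sh (TensorAlgebra.ι K y * v') w) := by
        intro w0
        have hw := consInd (LinearMap.eqLocus
            (sh (sh (TensorAlgebra.ι K x * u') (TensorAlgebra.ι K y * v')))
            (sh (TensorAlgebra.ι K x * u') ∘ₗ sh (TensorAlgebra.ι K y * v'))) ?_ ?_ w0
        · rw [LinearMap.mem_eqLocus] at hw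
          simpa using hw
        · rw [LinearMap.mem_eqLocus]
          show sh (sh _ _) 1 = sh _ (sh _ 1)
          simp [hshone']
        · intro z w' hw'
          rw [LinearMap.mem_eqLocus] at hw' ⊢
          have hw'' : sh (sh (TensorAlgebra.ι K x * u') (TensorAlgebra.ι K y * v')) w'
              = sh (TensorAlgebra.ι K x * u') (sh (TensorAlgebra.ι K y * v') w') := hw'
          show sh (sh (TensorAlgebra.ι K x * u') (TensorAlgebra.ι K y * v'))
              (TensorAlgebra.ι K z * w')
            = sh (TensorAlgebra.ι K x * u')
              (sh (TensorAlgebra.ι K y * v') (TensorAlgebra.ι K z * w'))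
          have hA : sh (sh (TensorAlgebra.ι K x * u') (TensorAlgebra.ι K y * v'))
                (TensorAlgebra.ι K z * w')
              = TensorAlgebra.ι K x * sh (sh u' (TensorAlgebra.ι K y * v'))
                  (TensorAlgebra.ι K z * w')
                + TensorAlgebra.ι K y * sh (sh (TensorAlgebra.ι K x * u') v')
                  (TensorAlgebra.ι K z * w')
                + TensorAlgebra.ι K z * sh (sh (TensorAlgebra.ι K x * u')
                  (TensorAlgebra.ι K y * v')) w' := by
            conv_lhs => rw [hshcons x y u' v']
            rw [map_add, LinearMap.add_apply,
              hshcons x z (sh u' (TensorAlgebra.ι K y * v')) w',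
              hshcons y z (sh (TensorAlgebra.ι K x * u') v') w']
            have hz : TensorAlgebra.ι K z * sh (TensorAlgebra.ι K x
                  * sh u' (TensorAlgebra.ι K y * v')) w'
                + TensorAlgebra.ι K z * sh (TensorAlgebra.ι K y
                  * sh (TensorAlgebra.ι K x * u') v') w'
                = TensorAlgebra.ι K z * sh (sh (TensorAlgebra.ι K x * u')
                  (TensorAlgebra.ι K y * v')) w' := by
              rw [← mul_add, ← LinearMap.add_apply, ← map_add, ← hshcons x y u' v']
            rw [← hz]; abel
          have hB : sh (TensorAlgebra.ι K x * u')
                (sh (TensorAlgebra.ι K y * v') (TensorAlgebra.ι K z * w'))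
              = TensorAlgebra.ι K x * sh u' (sh (TensorAlgebra.ι K y * v')
                  (TensorAlgebra.ι K z * w'))
                + TensorAlgebra.ι K y * sh (TensorAlgebra.ι K x * u')
                  (sh v' (TensorAlgebra.ι K z * w'))
                + TensorAlgebra.ι K z * sh (TensorAlgebra.ι K x * u')
                  (sh (TensorAlgebra.ι K y * v') w') := by
            conv_lhs => rw [hshcons y z v' w']
            rw [map_add, hshcons x y u' (sh v' (TensorAlgebra.ι K z * w')),
              hshcons x z u' (sh (TensorAlgebra.ι K y * v') w')]
            have hx : TensorAlgebra.ι K x * sh u' (TensorAlgebra.ι K y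
                  * sh v' (TensorAlgebra.ι K z * w'))
                + TensorAlgebra.ι K x * sh u' (TensorAlgebra.ι K z
                  * sh (TensorAlgebra.ι K y * v') w')
                = TensorAlgebra.ι K x * sh u' (sh (TensorAlgebra.ι K y * v')
                  (TensorAlgebra.ι K z * w')) := by
              rw [← mul_add, ← map_add, ← hshcons y z v' w']
            rw [← hx]; abel
          rw [hA, hB, hu' (TensorAlgebra.ι K y * v') (TensorAlgebra.ι K z * w'),
            hv'' (TensorAlgebra.ι K z * w'), hw'']
      intro w0
      show sh (sh _ _) w0 = sh _ (sh _ w0)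
      exact hv' w0
end hyps5

section hyps6
variable (sh : TensorAlgebra K V →ₗ[K] TensorAlgebra K V →ₗ[K] TensorAlgebra K V)
  (Δ : TensorAlgebra K V →ₗ[K] TensorAlgebra K V ⊗[K] TensorAlgebra K V)
  (hΔone : Δ 1 = 1 ⊗ₜ[K] 1)
  (hΔcons : ∀ (v : V) (u : TensorAlgebra K V),
      Δ (TensorAlgebra.ι K v * u) =
        1 ⊗ₜ[K] (TensorAlgebra.ι K v * u)
        + TensorProduct.map (LinearMap.mulLeft K (TensorAlgebra.ι K v)) LinearMap.id (Δ u))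
  (hshone : ∀ u, sh 1 u = u) (hshone' : ∀ u, sh u 1 = u)
  (hshcons : ∀ (x y : V) (u w : TensorAlgebra K V),
      sh (TensorAlgebra.ι K x * u) (TensorAlgebra.ι K y * w) =
        TensorAlgebra.ι K x * sh u (TensorAlgebra.ι K y * w)
        + TensorAlgebra.ι K y * sh (TensorAlgebra.ι K x * u) w)

include hΔone hΔcons hshone hshone' hshcons

set_option maxHeartbeats 1000000 in
set_option synthInstance.maxHeartbeats 1000000 in
private theorem deltaSh (u v : TensorAlgebra K V) :
    Δ (sh u v) = TensorProduct.map (TensorProduct.lift sh) (TensorProduct.lift sh)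
      (TensorProduct.tensorTensorTensorComm K (TensorAlgebra K V) (TensorAlgebra K V)
        (TensorAlgebra K V) (TensorAlgebra K V) (Δ u ⊗ₜ[K] Δ v)) := by
  have h := consInd (⨅ (v : TensorAlgebra K V),
      LinearMap.eqLocus (Δ ∘ₗ sh.flip v)
        (((TensorProduct.map (TensorProduct.lift sh) (TensorProduct.lift sh)) ∘ₗ
          (TensorProduct.tensorTensorTensorComm K (TensorAlgebra K V) (TensorAlgebra K V)
            (TensorAlgebra K V) (TensorAlgebra K V) :
              _ →ₗ[K] (TensorAlgebra K V ⊗[K] TensorAlgebra K V) ⊗[K]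
                (TensorAlgebra K V ⊗[K] TensorAlgebra K V))) ∘ₗ
          ((TensorProduct.mk K (TensorAlgebra K V ⊗[K] TensorAlgebra K V)
            (TensorAlgebra K V ⊗[K] TensorAlgebra K V)).flip (Δ v)) ∘ₗ Δ)) ?_ ?_ u
  · simp only [Submodule.mem_iInf, LinearMap.mem_eqLocus] at h
    have h2 := h v
    simp only [LinearMap.comp_apply, TensorProduct.mk_apply, LinearMap.flip_apply,
      LinearEquiv.coe_coe] at h2
    simpa using h2
  · simp only [Submodule.mem_iInf, LinearMap.mem_eqLocus]
    intro v
    show Δ (sh 1 v) = _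
    obtain ⟨sv, hsv⟩ := TensorProduct.exists_finset (Δ v)
    simp only [LinearMap.comp_apply, TensorProduct.mk_apply, LinearMap.flip_apply,
      LinearEquiv.coe_coe]
    rw [hshone, hΔone, hsv]
    simp [sum_tmul, tmul_sum, map_sum, TensorProduct.tensorTensorTensorComm_tmul, hshone]
  · intro x u' hu'0
    simp only [Submodule.mem_iInf, LinearMap.mem_eqLocus] at hu'0
    simp only [Submodule.mem_iInf, LinearMap.mem_eqLocus]
    have hu' : ∀ v, Δ (sh u' v) = TensorProduct.map (TensorProduct.lift sh)
        (TensorProduct.lift sh) (TensorProduct.tensorTensorTensorComm K (TensorAlgebra K V)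
          (TensorAlgebra K V) (TensorAlgebra K V) (TensorAlgebra K V) (Δ u' ⊗ₜ[K] Δ v)) := by
      intro v
      have := hu'0 v
      simpa using this
    intro v0
    -- inner induction on v0
    have hv := consInd (LinearMap.eqLocus
        (Δ ∘ₗ sh (TensorAlgebra.ι K x * u'))
        (((TensorProduct.map (TensorProduct.lift sh) (TensorProduct.lift sh)) ∘ₗ
          (TensorProduct.tensorTensorTensorComm K (TensorAlgebra K V) (TensorAlgebra K V)
            (TensorAlgebra K V) (TensorAlgebra K V) :
              _ →ₗ[K] (TensorAlgebra K V ⊗[K] TensorAlgebra K V) ⊗[K]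
                (TensorAlgebra K V ⊗[K] TensorAlgebra K V))) ∘ₗ
          ((TensorProduct.mk K (TensorAlgebra K V ⊗[K] TensorAlgebra K V)
            (TensorAlgebra K V ⊗[K] TensorAlgebra K V)) (Δ (TensorAlgebra.ι K x * u'))) ∘ₗ Δ))
        ?_ ?_ v0
    · rw [LinearMap.mem_eqLocus] at hv
      simp only [LinearMap.comp_apply, TensorProduct.mk_apply, LinearEquiv.coe_coe] at hv
      simpa using hv
    · rw [LinearMap.mem_eqLocus]
      show Δ (sh _ 1) = _
      obtain ⟨su, hsu⟩ := TensorProduct.exists_finset (Δ (TensorAlgebra.ι K x * u'))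
      simp only [LinearMap.comp_apply, TensorProduct.mk_apply, LinearEquiv.coe_coe]
      rw [hshone', hΔone, hsu]
      simp [sum_tmul, tmul_sum, map_sum, TensorProduct.tensorTensorTensorComm_tmul, hshone']
    · intro y v' hv'
      rw [LinearMap.mem_eqLocus] at hv' ⊢
      simp only [LinearMap.comp_apply, TensorProduct.mk_apply, LinearEquiv.coe_coe] at hv' ⊢
      obtain ⟨su', hsu'⟩ := TensorProduct.exists_finset (Δ u')
      obtain ⟨sv', hsv'⟩ := TensorProduct.exists_finset (Δ v')
      rw [hshcons x y u' v', map_add, hΔcons x (sh u' (TensorAlgebra.ι K y * v')),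
        hΔcons y (sh (TensorAlgebra.ι K x * u') v'), hu' (TensorAlgebra.ι K y * v'), hv',
        hΔcons x u', hΔcons y v', hsu', hsv']
      simp only [tmul_add, add_tmul, sum_tmul, tmul_sum, map_sum, map_add,
        TensorProduct.map_tmul, TensorProduct.lift.tmul,
        TensorProduct.tensorTensorTensorComm_tmul, LinearMap.mulLeft_apply, LinearMap.id_coe,
        id_eq, LinearEquiv.coe_coe, hshone, hshone', hshcons, mul_add, Finset.sum_add_distrib]
      abel
end hyps6

section hyps7
variable (sh B : TensorAlgebra K V →ₗ[K] TensorAlgebra K V →ₗ[K] TensorAlgebra K V)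
  (Δ : TensorAlgebra K V →ₗ[K] TensorAlgebra K V ⊗[K] TensorAlgebra K V)
  (π : TensorAlgebra K V →ₗ[K] V) (ε : TensorAlgebra K V →ₗ[K] K)
  (ϖ : TensorAlgebra K V ⊗[K] TensorAlgebra K V →ₗ[K] V)

set_option maxHeartbeats 2000000 in
set_option synthInstance.maxHeartbeats 1000000 in
private theorem FE
    (hBπ : ∀ u v : TensorAlgebra K V, π (B u v) = ϖ (u ⊗ₜ[K] v))
    (hBΔ : ∀ u v : TensorAlgebra K V, Δ (B u v) =
      TensorProduct.map LinearMap.id (B.flip v) (Δ u)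
      + TensorProduct.map (TensorProduct.lift B) (TensorProduct.lift sh)
          (TensorProduct.tensorTensorTensorComm K (TensorAlgebra K V)
            (TensorAlgebra K V) (TensorAlgebra K V) (TensorAlgebra K V)
            (Δ u ⊗ₜ[K] Δ v)))
    (hΔsh : ∀ u v, Δ (sh u v) = TensorProduct.map (TensorProduct.lift sh)
      (TensorProduct.lift sh) (TensorProduct.tensorTensorTensorComm K (TensorAlgebra K V)
        (TensorAlgebra K V) (TensorAlgebra K V) (TensorAlgebra K V) (Δ u ⊗ₜ[K] Δ v)))
    (hcomm : ∀ u v, sh u v = sh v u)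
    (hassoc : ∀ u v w, sh (sh u v) w = sh u (sh v w))
    (hpiSh : ∀ u v, π (sh u v) = ε u • π v + ε v • π u)
    (hepsB : ∀ u v, ε (B u v) = 0)
    (hepsSh : ∀ u v, ε (sh u v) = ε u * ε v)
    (hrecon : ∀ z, TensorProduct.lift ((LinearMap.mul K (TensorAlgebra K V)) ∘ₗ
      (TensorAlgebra.ι K ∘ₗ π)) (Δ z) = z - ε z • 1)
    (hCL : ∀ z, TensorProduct.lift ((LinearMap.lsmul K (TensorAlgebra K V)) ∘ₗ ε) (Δ z) = z)
    (hcond : ∀ u v w : TensorAlgebra K V,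
        ϖ (sh u v ⊗ₜ[K] w) = ε u • ϖ (v ⊗ₜ[K] w) + ε v • ϖ (u ⊗ₜ[K] w))
    (u v w : TensorAlgebra K V) :
    B (sh u v) w - sh (B u w) v - sh u (B v w)
      = TensorProduct.lift (((LinearMap.mul K (TensorAlgebra K V)) ∘ₗ
          (TensorAlgebra.ι K ∘ₗ π)).compl₂
          (B.flip w ∘ₗ sh.flip v - sh.flip v ∘ₗ B.flip w - sh.flip (B v w))) (Δ u)
        + TensorProduct.lift (((LinearMap.mul K (TensorAlgebra K V)) ∘ₗ
          (TensorAlgebra.ι K ∘ₗ π)).compl₂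
          (B.flip w ∘ₗ sh u - sh (B u w) - sh u ∘ₗ B.flip w)) (Δ v) := by
  obtain ⟨su, hsu⟩ := TensorProduct.exists_finset (Δ u)
  obtain ⟨sv, hsv⟩ := TensorProduct.exists_finset (Δ v)
  obtain ⟨sw, hsw⟩ := TensorProduct.exists_finset (Δ w)
  -- ε of the difference is zero
  have hεz : ε (B (sh u v) w - sh (B u w) v - sh u (B v w)) = 0 := by
    simp [map_sub, hepsB, hepsSh]
  -- reconstruction
  have hz : B (sh u v) w - sh (B u w) v - sh u (B v w)
      = TensorProduct.lift ((LinearMap.mul K (TensorAlgebra K V)) ∘ₗ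
          (TensorAlgebra.ι K ∘ₗ π)) (Δ (B (sh u v) w - sh (B u w) v - sh u (B v w))) := by
    rw [hrecon, hεz, zero_smul, sub_zero]
  have hA : Δ (B (sh u v) w)
      = (∑ p ∈ su, ∑ q ∈ sv, sh p.1 q.1 ⊗ₜ[K] B (sh p.2 q.2) w)
        + ∑ p ∈ su, ∑ q ∈ sv, ∑ r ∈ sw, B (sh p.1 q.1) r.1 ⊗ₜ[K] sh (sh p.2 q.2) r.2 := by
    rw [hBΔ (sh u v) w, hΔsh u v, hsu, hsv, hsw]
    simp only [sum_tmul, tmul_sum, tmul_add, add_tmul, map_sum, map_add,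
      TensorProduct.tensorTensorTensorComm_tmul, TensorProduct.map_tmul,
      TensorProduct.lift.tmul, LinearMap.id_coe, id_eq, LinearMap.flip_apply,
      LinearEquiv.coe_coe, Finset.sum_add_distrib]
    congr 1
    · exact Finset.sum_comm
    · exact sum_comm3a su sv sw _
  have hB2 : Δ (sh (B u w) v)
      = (∑ p ∈ su, ∑ q ∈ sv, sh p.1 q.1 ⊗ₜ[K] sh (B p.2 w) q.2)
        + ∑ p ∈ su, ∑ q ∈ sv, ∑ r ∈ sw, sh (B p.1 r.1) q.1 ⊗ₜ[K] sh (sh p.2 r.2) q.2 := by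
    rw [hΔsh (B u w) v, hBΔ u w, hsu, hsv, hsw]
    simp only [sum_tmul, tmul_sum, tmul_add, add_tmul, map_sum, map_add,
      TensorProduct.tensorTensorTensorComm_tmul, TensorProduct.map_tmul,
      TensorProduct.lift.tmul, LinearMap.id_coe, id_eq, LinearMap.flip_apply,
      LinearEquiv.coe_coe, Finset.sum_add_distrib]
    congr 1
    · exact Finset.sum_comm
    · exact sum_comm3b su sv sw _
  have hB3 : Δ (sh u (B v w))
      = (∑ p ∈ su, ∑ q ∈ sv, sh p.1 q.1 ⊗ₜ[K] sh p.2 (B q.2 w))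
        + ∑ p ∈ su, ∑ q ∈ sv, ∑ r ∈ sw, sh p.1 (B q.1 r.1) ⊗ₜ[K] sh p.2 (sh q.2 r.2) := by
    rw [hΔsh u (B v w), hBΔ v w, hsu, hsv, hsw]
    simp only [sum_tmul, tmul_sum, tmul_add, add_tmul, map_sum, map_add,
      TensorProduct.tensorTensorTensorComm_tmul, TensorProduct.map_tmul,
      TensorProduct.lift.tmul, LinearMap.id_coe, id_eq, LinearMap.flip_apply,
      LinearEquiv.coe_coe, Finset.sum_add_distrib]
    congr 1
    · exact Finset.sum_comm
    · exact sum_comm3a su sv sw _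
  have hΔz : Δ (B (sh u v) w - sh (B u w) v - sh u (B v w))
      = ((∑ p ∈ su, ∑ q ∈ sv, sh p.1 q.1 ⊗ₜ[K] B (sh p.2 q.2) w)
          + ∑ p ∈ su, ∑ q ∈ sv, ∑ r ∈ sw, B (sh p.1 q.1) r.1 ⊗ₜ[K] sh (sh p.2 q.2) r.2)
        - ((∑ p ∈ su, ∑ q ∈ sv, sh p.1 q.1 ⊗ₜ[K] sh (B p.2 w) q.2)
          + ∑ p ∈ su, ∑ q ∈ sv, ∑ r ∈ sw, sh (B p.1 r.1) q.1 ⊗ₜ[K] sh (sh p.2 r.2) q.2)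
        - ((∑ p ∈ su, ∑ q ∈ sv, sh p.1 q.1 ⊗ₜ[K] sh p.2 (B q.2 w))
          + ∑ p ∈ su, ∑ q ∈ sv, ∑ r ∈ sw, sh p.1 (B q.1 r.1) ⊗ₜ[K] sh p.2 (sh q.2 r.2)) := by
    rw [map_sub, map_sub, hA, hB2, hB3]
  rw [hΔz, map_sub, map_sub, map_add, map_add, map_add] at hz
  -- evaluate the six lifted sums
  have e1 : TensorProduct.lift ((LinearMap.mul K (TensorAlgebra K V)) ∘ₗ (TensorAlgebra.ι K ∘ₗ π))
      (∑ p ∈ su, ∑ q ∈ sv, sh p.1 q.1 ⊗ₜ[K] B (sh p.2 q.2) w)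
      = ∑ p ∈ su, ∑ q ∈ sv, TensorAlgebra.ι K (π (sh p.1 q.1)) * B (sh p.2 q.2) w := by
    simp only [map_sum, TensorProduct.lift.tmul, LinearMap.comp_apply, LinearMap.mul_apply']
  have e2 : TensorProduct.lift ((LinearMap.mul K (TensorAlgebra K V)) ∘ₗ (TensorAlgebra.ι K ∘ₗ π))
      (∑ p ∈ su, ∑ q ∈ sv, ∑ r ∈ sw, B (sh p.1 q.1) r.1 ⊗ₜ[K] sh (sh p.2 q.2) r.2)
      = ∑ p ∈ su, ∑ q ∈ sv, ∑ r ∈ sw,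
          TensorAlgebra.ι K (π (B (sh p.1 q.1) r.1)) * sh (sh p.2 q.2) r.2 := by
    simp only [map_sum, TensorProduct.lift.tmul, LinearMap.comp_apply, LinearMap.mul_apply']
  have e3 : TensorProduct.lift ((LinearMap.mul K (TensorAlgebra K V)) ∘ₗ (TensorAlgebra.ι K ∘ₗ π))
      (∑ p ∈ su, ∑ q ∈ sv, sh p.1 q.1 ⊗ₜ[K] sh (B p.2 w) q.2)
      = ∑ p ∈ su, ∑ q ∈ sv, TensorAlgebra.ι K (π (sh p.1 q.1)) * sh (B p.2 w) q.2 := by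
    simp only [map_sum, TensorProduct.lift.tmul, LinearMap.comp_apply, LinearMap.mul_apply']
  have e4 : TensorProduct.lift ((LinearMap.mul K (TensorAlgebra K V)) ∘ₗ (TensorAlgebra.ι K ∘ₗ π))
      (∑ p ∈ su, ∑ q ∈ sv, ∑ r ∈ sw, sh (B p.1 r.1) q.1 ⊗ₜ[K] sh (sh p.2 r.2) q.2)
      = ∑ p ∈ su, ∑ q ∈ sv, ∑ r ∈ sw,
          TensorAlgebra.ι K (π (sh (B p.1 r.1) q.1)) * sh (sh p.2 r.2) q.2 := by
    simp only [map_sum, TensorProduct.lift.tmul, LinearMap.comp_apply, LinearMap.mul_apply']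
  have e5 : TensorProduct.lift ((LinearMap.mul K (TensorAlgebra K V)) ∘ₗ (TensorAlgebra.ι K ∘ₗ π))
      (∑ p ∈ su, ∑ q ∈ sv, sh p.1 q.1 ⊗ₜ[K] sh p.2 (B q.2 w))
      = ∑ p ∈ su, ∑ q ∈ sv, TensorAlgebra.ι K (π (sh p.1 q.1)) * sh p.2 (B q.2 w) := by
    simp only [map_sum, TensorProduct.lift.tmul, LinearMap.comp_apply, LinearMap.mul_apply']
  have e6 : TensorProduct.lift ((LinearMap.mul K (TensorAlgebra K V)) ∘ₗ (TensorAlgebra.ι K ∘ₗ π))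
      (∑ p ∈ su, ∑ q ∈ sv, ∑ r ∈ sw, sh p.1 (B q.1 r.1) ⊗ₜ[K] sh p.2 (sh q.2 r.2))
      = ∑ p ∈ su, ∑ q ∈ sv, ∑ r ∈ sw,
          TensorAlgebra.ι K (π (sh p.1 (B q.1 r.1))) * sh p.2 (sh q.2 r.2) := by
    simp only [map_sum, TensorProduct.lift.tmul, LinearMap.comp_apply, LinearMap.mul_apply']
  rw [e1, e2, e3, e4, e5, e6] at hz
  -- the triple sums cancel using the ϖ-condition
  have htriple : ∀ p ∈ su, ∀ q ∈ sv, ∀ r ∈ sw,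
      (TensorAlgebra.ι K (π (B (sh p.1 q.1) r.1)) * sh (sh p.2 q.2) r.2
        - TensorAlgebra.ι K (π (sh (B p.1 r.1) q.1)) * sh (sh p.2 r.2) q.2)
        - TensorAlgebra.ι K (π (sh p.1 (B q.1 r.1))) * sh p.2 (sh q.2 r.2) = 0 := by
    intro p _ q _ r _
    have a1 : sh (sh p.2 r.2) q.2 = sh (sh p.2 q.2) r.2 := by
      rw [hassoc, hcomm r.2 q.2, ← hassoc]
    have a2 : sh p.2 (sh q.2 r.2) = sh (sh p.2 q.2) r.2 := (hassoc _ _ _).symm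
    have a3 : π (B (sh p.1 q.1) r.1) = ε p.1 • ϖ (q.1 ⊗ₜ[K] r.1) + ε q.1 • ϖ (p.1 ⊗ₜ[K] r.1) := by
      rw [hBπ, hcond]
    have a4 : π (sh (B p.1 r.1) q.1) = ε q.1 • ϖ (p.1 ⊗ₜ[K] r.1) := by
      rw [hpiSh, hepsB, hBπ]; simp
    have a5 : π (sh p.1 (B q.1 r.1)) = ε p.1 • ϖ (q.1 ⊗ₜ[K] r.1) := by
      rw [hpiSh, hepsB, hBπ]; simp
    rw [a1, a2, a3, a4, a5, map_add, add_mul]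
    abel
  have hzero : (∑ p ∈ su, ∑ q ∈ sv, ∑ r ∈ sw,
        TensorAlgebra.ι K (π (B (sh p.1 q.1) r.1)) * sh (sh p.2 q.2) r.2)
      - (∑ p ∈ su, ∑ q ∈ sv, ∑ r ∈ sw,
        TensorAlgebra.ι K (π (sh (B p.1 r.1) q.1)) * sh (sh p.2 r.2) q.2)
      - (∑ p ∈ su, ∑ q ∈ sv, ∑ r ∈ sw,
        TensorAlgebra.ι K (π (sh p.1 (B q.1 r.1))) * sh p.2 (sh q.2 r.2)) = 0 := by
    simp only [← Finset.sum_sub_distrib]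
    exact Finset.sum_eq_zero fun p hp => Finset.sum_eq_zero fun q hq =>
      Finset.sum_eq_zero fun r hr => htriple p hp q hq r hr
  have hz2 : B (sh u v) w - sh (B u w) v - sh u (B v w)
      = ∑ p ∈ su, ∑ q ∈ sv, TensorAlgebra.ι K (π (sh p.1 q.1)) *
          (B (sh p.2 q.2) w - sh (B p.2 w) q.2 - sh p.2 (B q.2 w)) := by
    rw [hz]
    rw [show ∀ (a b c d e f : TensorAlgebra K V), (a + b) - (c + d) - (e + f)
      = (a - c - e) + ((b - d) - f) from fun a b c d e f => by abel]
    rw [sub_sub (∑ p ∈ su, ∑ q ∈ sv, ∑ r ∈ sw,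
        TensorAlgebra.ι K (π (B (sh p.1 q.1) r.1)) * sh (sh p.2 q.2) r.2)]
    rw [show (∑ p ∈ su, ∑ q ∈ sv, ∑ r ∈ sw,
        TensorAlgebra.ι K (π (B (sh p.1 q.1) r.1)) * sh (sh p.2 q.2) r.2)
      - ((∑ p ∈ su, ∑ q ∈ sv, ∑ r ∈ sw,
        TensorAlgebra.ι K (π (sh (B p.1 r.1) q.1)) * sh (sh p.2 r.2) q.2)
      + (∑ p ∈ su, ∑ q ∈ sv, ∑ r ∈ sw,
        TensorAlgebra.ι K (π (sh p.1 (B q.1 r.1))) * sh p.2 (sh q.2 r.2))) = 0 from by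
        rw [← sub_sub]; exact hzero]
    rw [add_zero]
    simp only [← Finset.sum_sub_distrib, ← mul_sub]
  -- now split using piSh and collapse
  have hsplit : ∀ p ∈ su, ∀ q ∈ sv,
      TensorAlgebra.ι K (π (sh p.1 q.1)) *
          (B (sh p.2 q.2) w - sh (B p.2 w) q.2 - sh p.2 (B q.2 w))
        = ε p.1 • (TensorAlgebra.ι K (π q.1) *
            (B (sh p.2 q.2) w - sh (B p.2 w) q.2 - sh p.2 (B q.2 w)))
          + ε q.1 • (TensorAlgebra.ι K (π p.1) *
            (B (sh p.2 q.2) w - sh (B p.2 w) q.2 - sh p.2 (B q.2 w))) := by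
    intro p _ q _
    rw [hpiSh, map_add, map_smul, map_smul, add_mul, smul_mul_assoc, smul_mul_assoc]
  rw [Finset.sum_congr rfl (fun p hp => Finset.sum_congr rfl (hsplit p hp))] at hz2
  simp only [Finset.sum_add_distrib] at hz2
  -- collapse the first double sum (over p, for each q)
  have hcol1 : ∑ p ∈ su, ∑ q ∈ sv, ε p.1 • (TensorAlgebra.ι K (π q.1) *
        (B (sh p.2 q.2) w - sh (B p.2 w) q.2 - sh p.2 (B q.2 w)))
      = ∑ q ∈ sv, TensorAlgebra.ι K (π q.1) *
        (B (sh u q.2) w - sh (B u w) q.2 - sh u (B q.2 w)) := by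
    rw [Finset.sum_comm]
    refine Finset.sum_congr rfl fun q _ => ?_
    have := CLsL' (K := K) (V := V) ε Δ hCL
      ((LinearMap.mulLeft K (TensorAlgebra.ι K (π q.1))) ∘ₗ
        (B.flip w ∘ₗ sh.flip q.2 - sh.flip q.2 ∘ₗ B.flip w - sh.flip (B q.2 w))) u su hsu
    simpa using this
  have hcol2 : ∑ p ∈ su, ∑ q ∈ sv, ε q.1 • (TensorAlgebra.ι K (π p.1) *
        (B (sh p.2 q.2) w - sh (B p.2 w) q.2 - sh p.2 (B q.2 w)))
      = ∑ p ∈ su, TensorAlgebra.ι K (π p.1) *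
        (B (sh p.2 v) w - sh (B p.2 w) v - sh p.2 (B v w)) := by
    refine Finset.sum_congr rfl fun p _ => ?_
    have := CLsL' (K := K) (V := V) ε Δ hCL
      ((LinearMap.mulLeft K (TensorAlgebra.ι K (π p.1))) ∘ₗ
        (B.flip w ∘ₗ sh p.2 - sh (B p.2 w) - sh p.2 ∘ₗ B.flip w)) v sv hsv
    simpa using this
  rw [hcol1, hcol2] at hz2
  -- identify with the two lifted terms of the statement
  have hr1 : TensorProduct.lift (((LinearMap.mul K (TensorAlgebra K V)) ∘ₗ
        (TensorAlgebra.ι K ∘ₗ π)).compl₂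
        (B.flip w ∘ₗ sh.flip v - sh.flip v ∘ₗ B.flip w - sh.flip (B v w))) (Δ u)
      = ∑ p ∈ su, TensorAlgebra.ι K (π p.1) *
        (B (sh p.2 v) w - sh (B p.2 w) v - sh p.2 (B v w)) := by
    rw [hsu, map_sum]
    refine Finset.sum_congr rfl fun p _ => ?_
    simp [LinearMap.compl₂_apply, LinearMap.mul_apply']
  have hr2 : TensorProduct.lift (((LinearMap.mul K (TensorAlgebra K V)) ∘ₗ
        (TensorAlgebra.ι K ∘ₗ π)).compl₂
        (B.flip w ∘ₗ sh u - sh (B u w) - sh u ∘ₗ B.flip w)) (Δ v)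
      = ∑ q ∈ sv, TensorAlgebra.ι K (π q.1) *
        (B (sh u q.2) w - sh (B u w) q.2 - sh u (B q.2 w)) := by
    rw [hsv, map_sum]
    refine Finset.sum_congr rfl fun q _ => ?_
    simp [LinearMap.compl₂_apply, LinearMap.mul_apply']
  rw [hr1, hr2, hz2, add_comm]
end hyps7

section hyps8
variable (sh B : TensorAlgebra K V →ₗ[K] TensorAlgebra K V →ₗ[K] TensorAlgebra K V)
  (Δ : TensorAlgebra K V →ₗ[K] TensorAlgebra K V ⊗[K] TensorAlgebra K V)
  (π : TensorAlgebra K V →ₗ[K] V) (ε : TensorAlgebra K V →ₗ[K] K)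

set_option maxHeartbeats 1000000 in
private theorem dzero
    (hΔone : Δ 1 = 1 ⊗ₜ[K] 1)
    (hΔcons : ∀ (v : V) (u : TensorAlgebra K V),
      Δ (TensorAlgebra.ι K v * u) =
        1 ⊗ₜ[K] (TensorAlgebra.ι K v * u)
        + TensorProduct.map (LinearMap.mulLeft K (TensorAlgebra.ι K v)) LinearMap.id (Δ u))
    (hπone : π 1 = 0)
    (hpiCons : ∀ (x : V) (m : TensorAlgebra K V), π (TensorAlgebra.ι K x * m) = ε m • x)
    (hCL : ∀ z, TensorProduct.lift ((LinearMap.lsmul K (TensorAlgebra K V)) ∘ₗ ε) (Δ z) = z)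
    (hFE : ∀ u v w : TensorAlgebra K V,
      B (sh u v) w - sh (B u w) v - sh u (B v w)
        = TensorProduct.lift (((LinearMap.mul K (TensorAlgebra K V)) ∘ₗ
            (TensorAlgebra.ι K ∘ₗ π)).compl₂
            (B.flip w ∘ₗ sh.flip v - sh.flip v ∘ₗ B.flip w - sh.flip (B v w))) (Δ u)
          + TensorProduct.lift (((LinearMap.mul K (TensorAlgebra K V)) ∘ₗ
            (TensorAlgebra.ι K ∘ₗ π)).compl₂
            (B.flip w ∘ₗ sh u - sh (B u w) - sh u ∘ₗ B.flip w)) (Δ v))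
    (u v w : TensorAlgebra K V) :
    B (sh u v) w - sh (B u w) v - sh u (B v w) = 0 := by
  -- evaluation helpers
  have oneEval : ∀ (L : TensorAlgebra K V →ₗ[K] TensorAlgebra K V),
      TensorProduct.lift (((LinearMap.mul K (TensorAlgebra K V)) ∘ₗ
        (TensorAlgebra.ι K ∘ₗ π)).compl₂ L) (Δ 1) = 0 := by
    intro L
    rw [hΔone]
    simp [hπone]
  have consEval : ∀ (L : TensorAlgebra K V →ₗ[K] TensorAlgebra K V) (x : V)
      (t : TensorAlgebra K V),
      TensorProduct.lift (((LinearMap.mul K (TensorAlgebra K V)) ∘ₗ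
        (TensorAlgebra.ι K ∘ₗ π)).compl₂ L) (Δ (TensorAlgebra.ι K x * t))
      = TensorAlgebra.ι K x * L t := by
    intro L x t
    obtain ⟨st, hst⟩ := TensorProduct.exists_finset (Δ t)
    rw [hΔcons x t, map_add, hst]
    have h1 : TensorProduct.lift (((LinearMap.mul K (TensorAlgebra K V)) ∘ₗ
        (TensorAlgebra.ι K ∘ₗ π)).compl₂ L) (1 ⊗ₜ[K] (TensorAlgebra.ι K x * t)) = 0 := by
      simp [hπone]
    rw [h1, zero_add, map_sum, map_sum]
    have h2 : ∀ p ∈ st, TensorProduct.lift (((LinearMap.mul K (TensorAlgebra K V)) ∘ₗ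
        (TensorAlgebra.ι K ∘ₗ π)).compl₂ L)
        ((TensorProduct.map (LinearMap.mulLeft K (TensorAlgebra.ι K x)) LinearMap.id)
          (p.1 ⊗ₜ[K] p.2))
        = ε p.1 • ((LinearMap.mulLeft K (TensorAlgebra.ι K x) ∘ₗ L) p.2) := by
      intro p _
      simp [hpiCons, smul_mul_assoc, LinearMap.mul_apply']
    rw [Finset.sum_congr rfl h2]
    have := CLsL' ε Δ hCL (LinearMap.mulLeft K (TensorAlgebra.ι K x) ∘ₗ L) t st hst
    rw [this]
    simp
  -- main induction on u
  have hu := consInd (⨅ (v : TensorAlgebra K V), ⨅ (w : TensorAlgebra K V),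
      LinearMap.eqLocus (B.flip w ∘ₗ sh.flip v - sh.flip v ∘ₗ B.flip w - sh.flip (B v w)) 0)
      ?_ ?_ u
  · simp only [Submodule.mem_iInf, LinearMap.mem_eqLocus] at hu
    have := hu v w
    simpa using this
  · -- u = 1 : induction on v
    simp only [Submodule.mem_iInf, LinearMap.mem_eqLocus]
    intro v w
    have hv := consInd (⨅ (w : TensorAlgebra K V),
        LinearMap.eqLocus (B.flip w ∘ₗ sh 1 - sh (B 1 w) - sh 1 ∘ₗ B.flip w) 0) ?_ ?_ v
    · simp only [Submodule.mem_iInf, LinearMap.mem_eqLocus] at hv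
      have := hv w
      simp only [LinearMap.sub_apply, LinearMap.comp_apply, LinearMap.flip_apply,
        LinearMap.zero_apply] at this ⊢
      simpa using this
    · simp only [Submodule.mem_iInf, LinearMap.mem_eqLocus]
      intro w'
      simp only [LinearMap.sub_apply, LinearMap.comp_apply, LinearMap.flip_apply,
        LinearMap.zero_apply]
      rw [sub_sub, ← sub_sub, hFE 1 1 w', oneEval, oneEval, add_zero]
    · intro y v' hv'
      simp only [Submodule.mem_iInf, LinearMap.mem_eqLocus] at hv'
      simp only [Submodule.mem_iInf, LinearMap.mem_eqLocus]
      intro w'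
      simp only [LinearMap.sub_apply, LinearMap.comp_apply, LinearMap.flip_apply,
        LinearMap.zero_apply]
      rw [hFE 1 (TensorAlgebra.ι K y * v') w', oneEval, zero_add, consEval]
      have hd : (B.flip w' ∘ₗ sh 1 - sh (B 1 w') - sh 1 ∘ₗ B.flip w') v' = 0 := by
        have := hv' w'
        simpa using this
      rw [hd, mul_zero]
  · -- u = ι x * u' : induction on v
    intro x u' hu'
    simp only [Submodule.mem_iInf, LinearMap.mem_eqLocus] at hu'
    simp only [Submodule.mem_iInf, LinearMap.mem_eqLocus]
    have hu'' : ∀ v w, (B.flip w ∘ₗ sh.flip v - sh.flip v ∘ₗ B.flip w - sh.flip (B v w)) u' = 0 := by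
      intro v w
      have := hu' v w
      simpa using this
    intro v w
    have hv := consInd (⨅ (w : TensorAlgebra K V),
        LinearMap.eqLocus (B.flip w ∘ₗ sh (TensorAlgebra.ι K x * u')
          - sh (B (TensorAlgebra.ι K x * u') w)
          - sh (TensorAlgebra.ι K x * u') ∘ₗ B.flip w) 0) ?_ ?_ v
    · simp only [Submodule.mem_iInf, LinearMap.mem_eqLocus] at hv
      have := hv w
      simp only [LinearMap.sub_apply, LinearMap.comp_apply, LinearMap.flip_apply,
        LinearMap.zero_apply] at this ⊢
      simpa using this
    · simp only [Submodule.mem_iInf, LinearMap.mem_eqLocus]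
      intro w'
      simp only [LinearMap.sub_apply, LinearMap.comp_apply, LinearMap.flip_apply,
        LinearMap.zero_apply]
      rw [hFE (TensorAlgebra.ι K x * u') 1 w', oneEval, add_zero, consEval]
      rw [hu'' 1 w', mul_zero]
    · intro y v' hv'
      simp only [Submodule.mem_iInf, LinearMap.mem_eqLocus] at hv'
      simp only [Submodule.mem_iInf, LinearMap.mem_eqLocus]
      intro w'
      simp only [LinearMap.sub_apply, LinearMap.comp_apply, LinearMap.flip_apply,
        LinearMap.zero_apply]
      rw [hFE (TensorAlgebra.ι K x * u') (TensorAlgebra.ι K y * v') w', consEval, consEval]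
      rw [hu'' (TensorAlgebra.ι K y * v') w', mul_zero, zero_add]
      have hd : (B.flip w' ∘ₗ sh (TensorAlgebra.ι K x * u')
          - sh (B (TensorAlgebra.ι K x * u') w')
          - sh (TensorAlgebra.ι K x * u') ∘ₗ B.flip w') v' = 0 := by
        have := hv' w'
        simpa using this
      rw [hd, mul_zero]
end hyps8

end Aux

/-- With `•` defined from `ϖ` (characterized by `π ∘ • = ϖ` and the coproduct
identity), the Leibniz identity `(u⧢v)•w = (u•w)⧢v + u⧢(v•w)` holds for all
`u,v,w` iff `ϖ((u⧢v)⊗w) = ε(u)ϖ(v⊗w) + ε(v)ϖ(u⊗w)` for all `u,v,w`. -/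
theorem leibniz_iff_varpi_cond {K V : Type*} [Field K] [CharZero K]
    [AddCommGroup V] [Module K V]
    (Δ : TensorAlgebra K V →ₗ[K] TensorAlgebra K V ⊗[K] TensorAlgebra K V)
    (hΔone : Δ 1 = 1 ⊗ₜ[K] 1)
    (hΔcons : ∀ (v : V) (u : TensorAlgebra K V),
      Δ (TensorAlgebra.ι K v * u) =
        1 ⊗ₜ[K] (TensorAlgebra.ι K v * u)
        + TensorProduct.map (LinearMap.mulLeft K (TensorAlgebra.ι K v))
            LinearMap.id (Δ u))
    (sh : TensorAlgebra K V →ₗ[K] TensorAlgebra K V →ₗ[K] TensorAlgebra K V)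
    (hshone : ∀ u, sh 1 u = u) (hshone' : ∀ u, sh u 1 = u)
    (hshcons : ∀ (x y : V) (u w : TensorAlgebra K V),
      sh (TensorAlgebra.ι K x * u) (TensorAlgebra.ι K y * w) =
        TensorAlgebra.ι K x * sh u (TensorAlgebra.ι K y * w)
        + TensorAlgebra.ι K y * sh (TensorAlgebra.ι K x * u) w)
    (π : TensorAlgebra K V →ₗ[K] V)
    (hπone : π 1 = 0) (hπι : ∀ v : V, π (TensorAlgebra.ι K v) = v)
    (hπtwo : ∀ (v w : V) (u : TensorAlgebra K V),
      π (TensorAlgebra.ι K v * (TensorAlgebra.ι K w * u)) = 0)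
    (ε : TensorAlgebra K V →ₗ[K] K)
    (hεone : ε 1 = 1)
    (hεcons : ∀ (v : V) (u : TensorAlgebra K V), ε (TensorAlgebra.ι K v * u) = 0)
    (ϖ : TensorAlgebra K V ⊗[K] TensorAlgebra K V →ₗ[K] V)
    (B : TensorAlgebra K V →ₗ[K] TensorAlgebra K V →ₗ[K] TensorAlgebra K V)
    (hBπ : ∀ u v : TensorAlgebra K V, π (B u v) = ϖ (u ⊗ₜ[K] v))
    (hBΔ : ∀ u v : TensorAlgebra K V, Δ (B u v) =
      TensorProduct.map LinearMap.id (B.flip v) (Δ u)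
      + TensorProduct.map (TensorProduct.lift B) (TensorProduct.lift sh)
          (TensorProduct.tensorTensorTensorComm K (TensorAlgebra K V)
            (TensorAlgebra K V) (TensorAlgebra K V) (TensorAlgebra K V)
            (Δ u ⊗ₜ[K] Δ v))) :
    (∀ u v w : TensorAlgebra K V,
        B (sh u v) w = sh (B u w) v + sh u (B v w)) ↔
      (∀ u v w : TensorAlgebra K V,
        ϖ (sh u v ⊗ₜ[K] w) = ε u • ϖ (v ⊗ₜ[K] w) + ε v • ϖ (u ⊗ₜ[K] w)) := by
  have hpc := piCons π ε hπι hπtwo hεone hεcons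
  have hes := epsSh sh ε hshone hshone' hshcons hεone hεcons
  have hps := piSh sh ε π hshone hshone' hshcons hπone hεone hεcons hpc hes
  have hCL := CLmap ε Δ hΔone hΔcons hεone hεcons
  have hCR := CRmap ε Δ hΔone hΔcons hεone hεcons
  have heb := epsB sh B ε Δ hes hCL hCR hBΔ
  constructor
  · intro h u v w
    have h1 : π (B (sh u v) w) = π (sh (B u w) v + sh u (B v w)) := by rw [h u v w]
    rw [hBπ, map_add, hps (B u w) v, hps u (B v w), heb u w, heb v w, hBπ, hBπ] at h1
    rw [h1]
    simp only [zero_smul, add_zero, zero_add]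
    exact add_comm _ _
  · intro hcond u v w
    have hΔsh := deltaSh sh Δ hΔone hΔcons hshone hshone' hshcons
    have hcomm := shComm sh hshone hshone' hshcons
    have hassoc := shAssoc sh hshone hshone' hshcons
    have hrecon := reconMap ε π Δ hΔone hΔcons hπone hεone hεcons hpc hCL
    have hFE := FE sh B Δ π ε ϖ hBπ hBΔ hΔsh hcomm hassoc hps heb hes hrecon hCL hcond
    have hz := dzero sh B Δ π ε hΔone hΔcons hπone hpc hCL hFE u v w
    rw [sub_sub, sub_eq_zero] at hz
    exact hz
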